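/- arXiv:2006.15396 — 2 statements merged into one kernel-verified Lean document; each statement's English description precedes it below -/
import Mathlib

section
/- Let (Ω, F, P) be a probability space, and for each N let {V_{N,j}}_{1≤j≤M_N} be a triangular array of real random variables and F^N a sub-σ-field of F such that: (1) the V_{N,j} are conditionally independent given F^N and E[|V_{N,j}| | F^N] < ∞ for all N, j; (2) the sequence Σ_{j=1}^{M_N} E[|V_{N,j}| | F^N] is bounded in probability; (3) for every ε > 0, Σ_{j=1}^{M_N} E[|V_{N,j}| 1(|V_{N,j}| ≥ ε) | F^N] → 0 in probability as N → ∞. Then Σ_{j=1}^{M_N} (V_{N,j} − E[V_{N,j} | F^N]) → 0 in probability as N → ∞. -/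
open MeasureTheory ProbabilityTheory Filter Finset
open scoped ENNReal NNReal Topology

section Helpers

variable {α : Type*} {m m0 : MeasurableSpace α} {μ : Measure α}

private lemma integrable_of_abs_le {f : α → ℝ} {c : ℝ} [IsFiniteMeasure μ]
    (hf : AEStronglyMeasurable f μ) (h : ∀ x, |f x| ≤ c) : Integrable f μ :=
  Integrable.mono' (integrable_const c) hf
    (ae_of_all _ fun x => by simpa [Real.norm_eq_abs] using h x)

private lemma abs_condexp_le_abs (f : α → ℝ) (hf : Integrable f μ) :
    ∀ᵐ x ∂μ, |(μ[f|m]) x| ≤ (μ[fun x => |f x| | m]) x := by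
  have h1 : μ[f|m] ≤ᵐ[μ] μ[fun x => |f x| | m] :=
    condExp_mono hf hf.abs (ae_of_all _ fun x => le_abs_self _)
  have h2 : μ[-f|m] ≤ᵐ[μ] μ[fun x => |f x| | m] :=
    condExp_mono hf.neg hf.abs (ae_of_all _ fun x => neg_le_abs _)
  have h3 := condExp_neg (μ := μ) (m := m) f
  filter_upwards [h1, h2, h3] with x hx1 hx2 hx3
  rw [abs_le]
  refine ⟨?_, hx1⟩
  have : -(μ[f|m]) x ≤ (μ[fun x => |f x| | m]) x := by
    rw [← Pi.neg_apply, ← hx3]; exact hx2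
  linarith

private lemma abs_condexp_le_const (hm : m ≤ m0) [IsFiniteMeasure μ] {f : α → ℝ} {c : ℝ}
    (hf : Integrable f μ) (h : ∀ x, |f x| ≤ c) : ∀ᵐ x ∂μ, |(μ[f|m]) x| ≤ c := by
  have h1 := abs_condexp_le_abs (m := m) f hf
  have h2 : μ[fun x => |f x| | m] ≤ᵐ[μ] μ[fun _ => c | m] :=
    condExp_mono hf.abs (integrable_const c) (ae_of_all _ h)
  have h3 : μ[fun _ : α => c | m] = fun _ => c := condExp_const hm c
  filter_upwards [h1, h2] with x hx1 hx2
  exact hx1.trans (hx2.trans (le_of_eq (congrFun h3 x)))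

end Helpers

private lemma aux_condIndepFun_ae_indepFun {Ω : Type*} {m' : MeasurableSpace Ω}
    {mΩ : MeasurableSpace Ω} [StandardBorelSpace Ω] [Nonempty Ω]
    (hm' : m' ≤ mΩ) (μ : Measure Ω) [IsFiniteMeasure μ]
    {f g : Ω → ℝ} (hf : Measurable f) (hg : Measurable g)
    (h : CondIndepFun m' hm' f g μ) :
    ∀ᵐ ω ∂μ, IndepFun f g (condExpKernel μ m' ω) := by
  have h' : Kernel.IndepFun f g (condExpKernel μ m') (μ.trim hm') := h
  have h2 := Kernel.indepFun_iff_measure_inter_preimage_eq_mul.mp h'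
  have hae : ∀ᵐ ω ∂(μ.trim hm'), ∀ (q : ℚ) (r : ℚ),
      condExpKernel μ m' ω (f ⁻¹' Set.Iic (q : ℝ) ∩ g ⁻¹' Set.Iic (r : ℝ))
        = condExpKernel μ m' ω (f ⁻¹' Set.Iic (q : ℝ))
          * condExpKernel μ m' ω (g ⁻¹' Set.Iic (r : ℝ)) := by
    rw [ae_all_iff]
    intro q
    rw [ae_all_iff]
    intro r
    exact h2 _ _ measurableSet_Iic measurableSet_Iic
  refine ae_of_ae_trim hm' ?_
  filter_upwards [hae] with ω hω
  haveI : IsProbabilityMeasure (condExpKernel μ m' ω) := inferInstance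
  rw [IndepFun_iff_Indep]
  have hgen : ∀ (φ : Ω → ℝ), Measurable φ →
      MeasurableSpace.comap φ (inferInstance : MeasurableSpace ℝ) =
      MeasurableSpace.generateFrom {s : Set Ω | ∃ t ∈ (⋃ q : ℚ, {Set.Iic (q : ℝ)}), φ ⁻¹' t = s} := by
    intro φ hφ
    conv_lhs => rw [show (inferInstance : MeasurableSpace ℝ) = borel ℝ from
      BorelSpace.measurable_eq, Real.borel_eq_generateFrom_Iic_rat]
    rw [MeasurableSpace.comap_generateFrom]
    rfl
  refine IndepSets.indep hf.comap_le hg.comap_le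
    (Real.isPiSystem_Iic_rat.comap f) (Real.isPiSystem_Iic_rat.comap g)
    (hgen f hf) (hgen g hg) ?_
  rw [IndepSets_iff]
  rintro t1 t2 ⟨s1, hs1, rfl⟩ ⟨s2, hs2, rfl⟩
  simp only [Set.mem_iUnion, Set.mem_singleton_iff] at hs1 hs2
  obtain ⟨q, rfl⟩ := hs1
  obtain ⟨r, rfl⟩ := hs2
  exact hω q r

private lemma condexp_mul_of_condIndepFun {Ω : Type*} {m' : MeasurableSpace Ω}
    {mΩ : MeasurableSpace Ω} [StandardBorelSpace Ω] [Nonempty Ω]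
    {μ : Measure Ω} [IsFiniteMeasure μ] (hm' : m' ≤ mΩ)
    {f g : Ω → ℝ} (hf : Measurable f) (hg : Measurable g)
    (hfi : Integrable f μ) (hgi : Integrable g μ) (hfgi : Integrable (f * g) μ)
    (h : CondIndepFun m' hm' f g μ) :
    μ[f * g | m'] =ᵐ[μ] fun ω => (μ[f|m']) ω * (μ[g|m']) ω := by
  filter_upwards [condExp_ae_eq_integral_condExpKernel hm' hfgi,
    condExp_ae_eq_integral_condExpKernel hm' hfi,
    condExp_ae_eq_integral_condExpKernel hm' hgi,
    aux_condIndepFun_ae_indepFun hm' μ hf hg h] with ω h1 h2 h3 h4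
  rw [h1, h2, h3]
  exact h4.integral_mul_eq_mul_integral hf.aestronglyMeasurable hg.aestronglyMeasurable

private lemma condexp_cross_zero {Ω : Type*} {m' : MeasurableSpace Ω}
    {mΩ : MeasurableSpace Ω} [StandardBorelSpace Ω] [Nonempty Ω]
    (μ : Measure Ω) [IsProbabilityMeasure μ] (hm' : m' ≤ mΩ)
    {f g : Ω → ℝ} (hf : Measurable f) (hg : Measurable g) {c : ℝ}
    (hfb : ∀ x, |f x| ≤ c) (hgb : ∀ x, |g x| ≤ c)
    (h : CondIndepFun m' hm' f g μ) :
    μ[(fun ω => (f ω - (μ[f|m']) ω) * (g ω - (μ[g|m']) ω)) | m'] =ᵐ[μ] 0 := by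
  haveI : IsFiniteMeasure (μ.trim hm') := isFiniteMeasure_trim hm'
  have hc : 0 ≤ c := le_trans (abs_nonneg _) (hfb (Classical.arbitrary Ω))
  have hfi : Integrable f μ := integrable_of_abs_le hf.aestronglyMeasurable hfb
  have hgi : Integrable g μ := integrable_of_abs_le hg.aestronglyMeasurable hgb
  set mf := μ[f|m'] with hmf
  set mg := μ[g|m'] with hmg
  have hmfs : StronglyMeasurable[m'] mf := stronglyMeasurable_condExp
  have hmgs : StronglyMeasurable[m'] mg := stronglyMeasurable_condExp
  have hmfm : AEStronglyMeasurable mf μ := (hmfs.mono hm').aestronglyMeasurable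
  have hmgm : AEStronglyMeasurable mg μ := (hmgs.mono hm').aestronglyMeasurable
  have hmfb : ∀ᵐ x ∂μ, |mf x| ≤ c := abs_condexp_le_const hm' hfi hfb
  have hmgb : ∀ᵐ x ∂μ, |mg x| ≤ c := abs_condexp_le_const hm' hgi hgb
  have habnd : ∀ (p q : Ω → ℝ), AEStronglyMeasurable p μ → AEStronglyMeasurable q μ →
      (∀ᵐ x ∂μ, |p x| ≤ c) → (∀ᵐ x ∂μ, |q x| ≤ c) → Integrable (p * q) μ := by
    intro p q hp hq hpb hqb
    refine Integrable.mono' (integrable_const (c * c)) (hp.mul hq) ?_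
    filter_upwards [hpb, hqb] with x h1 h2
    rw [Pi.mul_apply, Real.norm_eq_abs, abs_mul]
    exact mul_le_mul h1 h2 (abs_nonneg _) hc
  have hfg_int : Integrable (f * g) μ :=
    habnd f g hf.aestronglyMeasurable hg.aestronglyMeasurable
      (ae_of_all _ hfb) (ae_of_all _ hgb)
  have hmfg_int : Integrable (mf * g) μ :=
    habnd mf g hmfm hg.aestronglyMeasurable hmfb (ae_of_all _ hgb)
  have hmgf_int : Integrable (mg * f) μ :=
    habnd mg f hmgm hf.aestronglyMeasurable hmgb (ae_of_all _ hfb)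
  have hmfmg_int : Integrable (mf * mg) μ := habnd mf mg hmfm hmgm hmfb hmgb
  have hXeq : (fun ω => (f ω - mf ω) * (g ω - mg ω))
      = (f * g - mf * g) - (mg * f - mf * mg) := by
    funext ω
    simp only [Pi.sub_apply, Pi.mul_apply]
    ring
  rw [hXeq]
  have h1 : μ[(f * g - mf * g) - (mg * f - mf * mg)|m']
      =ᵐ[μ] μ[f * g - mf * g|m'] - μ[mg * f - mf * mg|m'] :=
    condExp_sub (hfg_int.sub hmfg_int) (hmgf_int.sub hmfmg_int) m'
  have h2 : μ[f * g - mf * g|m'] =ᵐ[μ] μ[f * g|m'] - μ[mf * g|m'] :=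
    condExp_sub hfg_int hmfg_int m'
  have h3 : μ[mg * f - mf * mg|m'] =ᵐ[μ] μ[mg * f|m'] - μ[mf * mg|m'] :=
    condExp_sub hmgf_int hmfmg_int m'
  have h4 : μ[f * g|m'] =ᵐ[μ] fun ω => mf ω * mg ω :=
    condexp_mul_of_condIndepFun hm' hf hg hfi hgi hfg_int h
  have h5 : μ[mf * g|m'] =ᵐ[μ] mf * mg :=
    condExp_mul_of_stronglyMeasurable_left hmfs hmfg_int hgi
  have h6 : μ[mg * f|m'] =ᵐ[μ] mg * mf :=
    condExp_mul_of_stronglyMeasurable_left hmgs hmgf_int hfi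
  have h7 : μ[mf * mg|m'] = mf * mg :=
    condExp_of_stronglyMeasurable hm' (hmfs.mul hmgs) hmfmg_int
  filter_upwards [h1, h2, h3, h4, h5, h6] with ω e1 e2 e3 e4 e5 e6
  rw [e1]
  simp only [Pi.sub_apply] at *
  rw [e2, e3, e4, e5, e6, h7]
  simp only [Pi.mul_apply, Pi.zero_apply]
  ring

/-- A conditional Markov-type inequality for a sum of nonnegative variables. -/
private lemma markov_aux {Ω : Type*} {m' : MeasurableSpace Ω} {mΩ : MeasurableSpace Ω}
    (μ : Measure Ω) [IsProbabilityMeasure μ] (hm' : m' ≤ mΩ)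
    {n : ℕ} {U : ℕ → Ω → ℝ} (hUmeas : ∀ j, Measurable (U j))
    (hU : ∀ j, Integrable (U j) μ)
    {c b : ℝ} (hc : 0 < c) (hb : 0 ≤ b) :
    μ ({ω | c ≤ ∑ j ∈ range n, |U j ω|}
        ∩ {ω | ∑ j ∈ range n, (μ[fun ω' => |U j ω'| | m']) ω ≤ b})
      ≤ ENNReal.ofReal (b / c) := by
  haveI : IsFiniteMeasure (μ.trim hm') := isFiniteMeasure_trim hm'
  set E := {ω | c ≤ ∑ j ∈ range n, |U j ω|} with hEdef
  set G := {ω | ∑ j ∈ range n, (μ[fun ω' => |U j ω'| | m']) ω ≤ b} with hGdef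
  have hGm' : MeasurableSet[m'] G := by
    refine @measurableSet_le _ _ _ _ _ m' _ _ _ _ _ ?_ ?_
    · exact Finset.measurable_sum _ fun j _ =>
        (stronglyMeasurable_condExp (f := fun ω' => |U j ω'|)).measurable
    · exact @measurable_const _ _ _ m' _
  have hGm : MeasurableSet G := hm' _ hGm'
  have hEm : MeasurableSet E :=
    measurableSet_le measurable_const (Finset.measurable_sum _ fun j _ => (hUmeas j).abs)
  have hsum_int : Integrable (fun ω => ∑ j ∈ range n, |U j ω|) μ :=
    integrable_finset_sum _ fun j _ => (hU j).abs
  have step1 : c * (μ (E ∩ G)).toReal ≤ ∫ x in E ∩ G, ∑ j ∈ range n, |U j x| ∂μ :=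
    setIntegral_ge_of_const_le_real (hEm.inter hGm) (measure_ne_top μ _)
      (fun x hx => hx.1) hsum_int.integrableOn
  have step2 : ∫ x in E ∩ G, ∑ j ∈ range n, |U j x| ∂μ
      ≤ ∫ x in G, ∑ j ∈ range n, |U j x| ∂μ :=
    setIntegral_mono_set hsum_int.integrableOn
      (ae_of_all _ fun x => Finset.sum_nonneg fun j _ => abs_nonneg _)
      (HasSubset.Subset.eventuallyLE Set.inter_subset_right)
  have step3 : ∫ x in G, ∑ j ∈ range n, |U j x| ∂μ
      = ∫ x in G, ∑ j ∈ range n, (μ[fun ω' => |U j ω'| | m']) x ∂μ := by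
    rw [integral_finset_sum _ fun j _ => (hU j).abs.integrableOn,
      integral_finset_sum _ fun j _ => integrable_condExp.integrableOn]
    refine Finset.sum_congr rfl fun j _ => ?_
    exact (setIntegral_condExp hm' (hU j).abs hGm').symm
  have step4 : ∫ x in G, ∑ j ∈ range n, (μ[fun ω' => |U j ω'| | m']) x ∂μ
      ≤ b * (μ G).toReal := by
    have : ∫ x in G, ∑ j ∈ range n, (μ[fun ω' => |U j ω'| | m']) x ∂μ
        ≤ ∫ _x in G, b ∂μ := by
      refine setIntegral_mono_on
        (integrable_finset_sum _ fun j _ => integrable_condExp).integrableOn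
        (integrableOn_const (measure_ne_top μ _)) hGm fun x hx => hx
    have h' : ∫ x in G, ∑ j ∈ range n, (μ[fun ω' => |U j ω'| | m']) x ∂μ ≤ b * μ.real G := by simpa [smul_eq_mul, mul_comm] using this
    exact h'
  have hμG : (μ G).toReal ≤ 1 := by
    rw [← ENNReal.toReal_one]
    exact ENNReal.toReal_mono (by simp) prob_le_one
  have key : c * (μ (E ∩ G)).toReal ≤ b := by
    refine le_trans (step1.trans (step2.trans (step3.le.trans step4))) ?_
    calc b * (μ G).toReal ≤ b * 1 := by nlinarith
    _ = b := mul_one b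
  rw [ENNReal.le_ofReal_iff_toReal_le (measure_ne_top μ _) (by positivity)]
  rw [le_div_iff₀ hc]
  linarith [key]

/-- A conditional Chebyshev-type inequality for sums of bounded conditionally
independent variables. -/
private lemma cheb_aux {Ω : Type*} {m' : MeasurableSpace Ω}
    {mΩ : MeasurableSpace Ω} [StandardBorelSpace Ω] [Nonempty Ω]
    (μ : Measure Ω) [IsProbabilityMeasure μ] (hm' : m' ≤ mΩ)
    {n : ℕ} {W : ℕ → Ω → ℝ} (hWmeas : ∀ j, Measurable (W j))
    {c : ℝ} (hc : 0 < c) (hWb : ∀ j x, |W j x| ≤ c)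
    (hind : ∀ i j, i < n → j < n → i ≠ j → CondIndepFun m' hm' (W i) (W j) μ)
    {R : Ω → ℝ} (hR : StronglyMeasurable[m'] R) (hRint : Integrable R μ)
    (hsum : ∀ᵐ ω ∂μ, ∑ j ∈ range n, (μ[fun ω' => |W j ω'| | m']) ω ≤ R ω)
    {e K : ℝ} (he : 0 < e) (hK : 0 ≤ K) :
    μ ({ω | e ≤ |∑ j ∈ range n, (W j ω - (μ[W j | m']) ω)|} ∩ {ω | R ω ≤ K})
      ≤ ENNReal.ofReal (4 * c * K / e ^ 2) := by
  haveI : IsFiniteMeasure (μ.trim hm') := isFiniteMeasure_trim hm'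
  have hWint : ∀ j, Integrable (W j) μ :=
    fun j => integrable_of_abs_le (hWmeas j).aestronglyMeasurable (hWb j)
  set X := fun j => fun ω => W j ω - (μ[W j | m']) ω with hXdef
  have hXmeas : ∀ j, Measurable (X j) :=
    fun j => (hWmeas j).sub (stronglyMeasurable_condExp.mono hm').measurable
  have hmWb : ∀ j, ∀ᵐ x ∂μ, |(μ[W j | m']) x| ≤ c :=
    fun j => abs_condexp_le_const hm' (hWint j) (hWb j)
  have hXb : ∀ j, ∀ᵐ x ∂μ, |X j x| ≤ 2 * c := by
    intro j
    filter_upwards [hmWb j] with x hx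
    calc |X j x| ≤ |W j x| + |(μ[W j | m']) x| := abs_sub _ _
    _ ≤ c + c := add_le_add (hWb j x) hx
    _ = 2 * c := by ring
  have hXint : ∀ j, Integrable (X j) μ := fun j => (hWint j).sub integrable_condExp
  have hXXint : ∀ i j, Integrable (fun ω => X i ω * X j ω) μ := by
    intro i j
    refine Integrable.mono' (integrable_const ((2 * c) * (2 * c)))
      ((hXmeas i).aestronglyMeasurable.mul (hXmeas j).aestronglyMeasurable) ?_
    filter_upwards [hXb i, hXb j] with x h1 h2
    rw [Real.norm_eq_abs, abs_mul]
    exact mul_le_mul h1 h2 (abs_nonneg _) (by linarith)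
  set D := {ω | R ω ≤ K} with hDdef
  have hDm' : MeasurableSet[m'] D := by
    refine @measurableSet_le _ _ _ _ _ m' _ _ _ _ _ hR.measurable ?_
    exact @measurable_const _ _ _ m' _
  have hDm : MeasurableSet D := hm' _ hDm'
  set CS := fun ω => ∑ j ∈ range n, X j ω with hCSdef
  have hCSmeas : Measurable CS := Finset.measurable_sum _ fun j _ => hXmeas j
  have hCSb : ∀ᵐ x ∂μ, |CS x| ≤ n * (2 * c) := by
    have h := ae_all_iff.2 fun j : ℕ => hXb j
    filter_upwards [h] with x hx
    calc |CS x| ≤ ∑ j ∈ range n, |X j x| := Finset.abs_sum_le_sum_abs _ _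
    _ ≤ ∑ _j ∈ range n, (2 * c) := Finset.sum_le_sum fun j _ => hx j
    _ = n * (2 * c) := by simp [Finset.sum_const, nsmul_eq_mul]
  have hCS2int : Integrable (fun ω => CS ω ^ 2) μ := by
    refine Integrable.mono' (integrable_const ((n * (2 * c)) ^ 2))
      ((hCSmeas.pow_const 2).aestronglyMeasurable) ?_
    filter_upwards [hCSb] with x hx
    rw [Real.norm_eq_abs, abs_pow]
    have h0 : (0:ℝ) ≤ |CS x| := abs_nonneg _
    nlinarith
  have hEm : MeasurableSet {ω | e ≤ |CS ω|} :=
    measurableSet_le measurable_const hCSmeas.abs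
  -- Chebyshev step
  have step1 : e ^ 2 * (μ ({ω | e ≤ |CS ω|} ∩ D)).toReal ≤ ∫ x in {ω | e ≤ |CS ω|} ∩ D, CS x ^ 2 ∂μ := by
    refine setIntegral_ge_of_const_le_real (hEm.inter hDm) (measure_ne_top μ _)
      (fun x hx => ?_) hCS2int.integrableOn
    have hx1 : e ≤ |CS x| := hx.1
    calc e ^ 2 ≤ |CS x| ^ 2 := by nlinarith [abs_nonneg (CS x)]
    _ = CS x ^ 2 := sq_abs _
  have step2 : ∫ x in {ω | e ≤ |CS ω|} ∩ D, CS x ^ 2 ∂μ ≤ ∫ x in D, CS x ^ 2 ∂μ :=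
    setIntegral_mono_set hCS2int.integrableOn (ae_of_all _ fun x => sq_nonneg _)
      (HasSubset.Subset.eventuallyLE Set.inter_subset_right)
  -- expand the square
  have step3 : ∫ x in D, CS x ^ 2 ∂μ
      = ∑ i ∈ range n, ∑ j ∈ range n, ∫ x in D, X i x * X j x ∂μ := by
    have hpt : ∀ x, CS x ^ 2 = ∑ i ∈ range n, ∑ j ∈ range n, X i x * X j x := by
      intro x
      rw [pow_two, hCSdef]
      rw [Finset.sum_mul_sum]
    simp_rw [hpt]
    rw [integral_finset_sum _ fun i _ =>
      (integrable_finset_sum _ fun j _ => (hXXint i j).integrableOn)]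
    refine Finset.sum_congr rfl fun i _ => ?_
    exact integral_finset_sum _ fun j _ => (hXXint i j).integrableOn
  -- cross terms vanish
  have hcross : ∀ i j, i < n → j < n → i ≠ j → ∫ x in D, X i x * X j x ∂μ = 0 := by
    intro i j hi hj hij
    have hcond : μ[(fun ω => X i ω * X j ω) | m'] =ᵐ[μ] 0 :=
      condexp_cross_zero μ hm' (hWmeas i) (hWmeas j) (hWb i) (hWb j) (hind i j hi hj hij)
    have := setIntegral_condExp hm' (hXXint i j) hDm'
    rw [← this]
    rw [integral_congr_ae (ae_restrict_of_ae hcond)]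
    simp
  have step4 : ∑ i ∈ range n, ∑ j ∈ range n, ∫ x in D, X i x * X j x ∂μ
      = ∑ i ∈ range n, ∫ x in D, X i x * X i x ∂μ := by
    refine Finset.sum_congr rfl fun i hi => ?_
    exact Finset.sum_eq_single_of_mem i hi fun j hjn hj =>
      hcross i j (Finset.mem_range.mp hi) (Finset.mem_range.mp hjn) (Ne.symm hj)
  -- diagonal terms
  have hdiag : ∀ i, ∫ x in D, X i x * X i x ∂μ
      ≤ 4 * c * ∫ x in D, (μ[fun ω' => |W i ω'| | m']) x ∂μ := by
    intro i
    have hWabs_int : Integrable (fun ω => |W i ω|) μ := (hWint i).abs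
    have hbd : ∀ᵐ x ∂μ, X i x * X i x
        ≤ 2 * c * |W i x| + 2 * c * (μ[fun ω' => |W i ω'| | m']) x := by
      have habs := abs_condexp_le_abs (m := m') (W i) (hWint i)
      filter_upwards [hmWb i, habs] with x h1 h2
      have h3 : |(μ[W i | m']) x| ≤ (μ[fun ω' => |W i ω'| | m']) x := h2
      have h4 : X i x * X i x ≤ 2 * (W i x)^2 + 2 * ((μ[W i | m']) x)^2 := by
        have hXx : X i x = W i x - (μ[W i | m']) x := rfl
        rw [hXx]; nlinarith [sq_nonneg (W i x + (μ[W i | m']) x)]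
      have h5 : (W i x)^2 ≤ c * |W i x| := by
        rw [pow_two, ← abs_mul_abs_self]
        exact mul_le_mul_of_nonneg_right (hWb i x) (abs_nonneg _)
      have h6 : ((μ[W i | m']) x)^2 ≤ c * (μ[fun ω' => |W i ω'| | m']) x := by
        rw [pow_two, ← abs_mul_abs_self]
        calc |(μ[W i | m']) x| * |(μ[W i | m']) x| ≤ c * |(μ[W i | m']) x| :=
          mul_le_mul_of_nonneg_right h1 (abs_nonneg _)
        _ ≤ c * (μ[fun ω' => |W i ω'| | m']) x :=
          mul_le_mul_of_nonneg_left h3 hc.le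
      nlinarith
    have hrhs_int : Integrable
        (fun x => 2 * c * |W i x| + 2 * c * (μ[fun ω' => |W i ω'| | m']) x) μ :=
      ((hWabs_int.const_mul _).add (integrable_condExp.const_mul _))
    calc ∫ x in D, X i x * X i x ∂μ
        ≤ ∫ x in D, (2 * c * |W i x| + 2 * c * (μ[fun ω' => |W i ω'| | m']) x) ∂μ :=
          integral_mono_ae (hXXint i i).integrableOn hrhs_int.integrableOn
            (ae_restrict_of_ae hbd)
    _ = 2 * c * (∫ x in D, |W i x| ∂μ) + 2 * c * ∫ x in D, (μ[fun ω' => |W i ω'| | m']) x ∂μ := by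
          rw [integral_add (hWabs_int.const_mul _).integrableOn
            (integrable_condExp.const_mul _).integrableOn,
            integral_const_mul, integral_const_mul]
    _ = 4 * c * ∫ x in D, (μ[fun ω' => |W i ω'| | m']) x ∂μ := by
          rw [← setIntegral_condExp hm' hWabs_int hDm']
          ring
  -- sum the diagonal bound
  have step5 : ∑ i ∈ range n, ∫ x in D, X i x * X i x ∂μ ≤ 4 * c * K := by
    have h1 : ∑ i ∈ range n, ∫ x in D, X i x * X i x ∂μ
        ≤ 4 * c * ∑ i ∈ range n, ∫ x in D, (μ[fun ω' => |W i ω'| | m']) x ∂μ := by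
      rw [Finset.mul_sum]
      exact Finset.sum_le_sum fun i _ => hdiag i
    have h2 : ∑ i ∈ range n, ∫ x in D, (μ[fun ω' => |W i ω'| | m']) x ∂μ
        = ∫ x in D, (∑ i ∈ range n, (μ[fun ω' => |W i ω'| | m']) x) ∂μ :=
      (integral_finset_sum _ fun i _ => integrable_condExp.integrableOn).symm
    have h3 : ∫ x in D, (∑ i ∈ range n, (μ[fun ω' => |W i ω'| | m']) x) ∂μ
        ≤ ∫ x in D, R x ∂μ :=
      integral_mono_ae (integrable_finset_sum _ fun i _ => integrable_condExp).integrableOn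
        hRint.integrableOn (ae_restrict_of_ae hsum)
    have h4 : ∫ x in D, R x ∂μ ≤ K := by
      have : ∫ x in D, R x ∂μ ≤ ∫ _x in D, K ∂μ :=
        setIntegral_mono_on hRint.integrableOn
          (integrableOn_const (measure_ne_top μ _)) hDm fun x hx => hx
      refine this.trans ?_
      rw [setIntegral_const, smul_eq_mul]
      change (μ D).toReal * K ≤ K
      have hμD : (μ D).toReal ≤ 1 := by
        rw [← ENNReal.toReal_one]
        exact ENNReal.toReal_mono (by simp) prob_le_one
      nlinarith
    calc ∑ i ∈ range n, ∫ x in D, X i x * X i x ∂μ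
        ≤ 4 * c * ∑ i ∈ range n, ∫ x in D, (μ[fun ω' => |W i ω'| | m']) x ∂μ := h1
    _ = 4 * c * ∫ x in D, (∑ i ∈ range n, (μ[fun ω' => |W i ω'| | m']) x) ∂μ := by rw [h2]
    _ ≤ 4 * c * ∫ x in D, R x ∂μ := by nlinarith
    _ ≤ 4 * c * K := by nlinarith
  have key : e ^ 2 * (μ ({ω | e ≤ |CS ω|} ∩ D)).toReal ≤ 4 * c * K := by
    calc e ^ 2 * (μ ({ω | e ≤ |CS ω|} ∩ D)).toReal
        ≤ ∫ x in {ω | e ≤ |CS ω|} ∩ D, CS x ^ 2 ∂μ := step1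
    _ ≤ ∫ x in D, CS x ^ 2 ∂μ := step2
    _ = ∑ i ∈ range n, ∑ j ∈ range n, ∫ x in D, X i x * X j x ∂μ := step3
    _ = ∑ i ∈ range n, ∫ x in D, X i x * X i x ∂μ := step4
    _ ≤ 4 * c * K := step5
  rw [ENNReal.le_ofReal_iff_toReal_le (measure_ne_top μ _) (by positivity)]
  rw [le_div_iff₀ (by positivity)]
  linarith [key]

/-- Conditional weak law of large numbers for triangular arrays
(Proposition 9.5.7 of Cappé–Moulines–Rydén). -/
theorem conditional_wlln_triangular_array
    {Ω : Type*} [m : MeasurableSpace Ω] [StandardBorelSpace Ω] [Nonempty Ω]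
    (μ : Measure Ω) [IsProbabilityMeasure μ]
    (M : ℕ → ℕ) (V : ℕ → ℕ → Ω → ℝ)
    (𝔉 : ℕ → MeasurableSpace Ω) (h𝔉 : ∀ N, 𝔉 N ≤ m)
    (hmeas : ∀ N j, Measurable (V N j))
    -- (1) conditional independence given 𝔉 N and conditional integrability
    (hindep : ∀ N, iCondIndepFun (𝔉 N) (h𝔉 N)
      (m := fun _ : Fin (M N) => (inferInstance : MeasurableSpace ℝ))
      (fun j : Fin (M N) => V N j) μ)
    (hint : ∀ N j, Integrable (V N j) μ)
    -- (2) the row sums of conditional absolute expectations are bounded in probability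
    (hbdd : ∀ δ : ℝ, 0 < δ → ∃ K : ℝ, ∀ N,
      μ {ω | K < ∑ j ∈ range (M N), (μ[fun ω' => |V N j ω'| | 𝔉 N]) ω}
        < ENNReal.ofReal δ)
    -- (3) conditional uniform integrability (Lindeberg-type condition)
    (hunif : ∀ ε : ℝ, 0 < ε → TendstoInMeasure μ
      (fun N ω => ∑ j ∈ range (M N),
        (μ[fun ω' => |V N j ω'| * Set.indicator {ω'' | ε ≤ |V N j ω''|} 1 ω' | 𝔉 N]) ω)
      atTop (fun _ => (0 : ℝ))) :
    TendstoInMeasure μ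
      (fun N ω => ∑ j ∈ range (M N), (V N j ω - (μ[V N j | 𝔉 N]) ω))
      atTop (fun _ => (0 : ℝ)) := by
  rw [tendstoInMeasure_iff_dist]
  intro a ha
  rw [ENNReal.tendsto_atTop_zero]
  intro ε hε
  obtain ⟨δ, hδ, hδε⟩ : ∃ δ : ℝ, 0 < δ ∧ ENNReal.ofReal (5 * δ) ≤ ε := by
    rcases eq_or_ne ε ⊤ with rfl | htop
    · exact ⟨1, one_pos, le_top⟩
    · have h0 : 0 < ε.toReal := ENNReal.toReal_pos hε.ne' htop
      refine ⟨ε.toReal / 10, by linarith, ?_⟩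
      have h1 : (5:ℝ) * (ε.toReal / 10) = ε.toReal / 2 := by ring
      rw [h1]
      calc ENNReal.ofReal (ε.toReal / 2) ≤ ENNReal.ofReal ε.toReal :=
        ENNReal.ofReal_le_ofReal (by linarith)
      _ = ε := ENNReal.ofReal_toReal htop
  obtain ⟨K₀, hK₀⟩ := hbdd δ hδ
  set K := max K₀ 1 with hKdef
  have hK1 : (1:ℝ) ≤ K := le_max_right _ _
  have hKpos : (0:ℝ) < K := lt_of_lt_of_le one_pos hK1
  have hK : ∀ N', μ {ω | K < ∑ j ∈ range (M N'), (μ[fun ω' => |V N' j ω'| | 𝔉 N']) ω}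
      < ENNReal.ofReal δ := by
    intro N'
    refine lt_of_le_of_lt (measure_mono ?_) (hK₀ N')
    intro ω hω
    simp only [Set.mem_setOf_eq] at hω ⊢
    exact lt_of_le_of_lt (le_max_left _ _) hω
  set ε₀ := a ^ 2 * δ / (144 * K) with hε₀def
  have hε₀ : 0 < ε₀ := by
    apply div_pos
    · positivity
    · positivity
  set b := a * δ / 3 with hbdef
  have hb : 0 < b := by positivity
  -- the two eventualities coming from `hunif`
  have hev1 := (tendstoInMeasure_iff_dist.mp (hunif ε₀ hε₀) b hb).eventually (gt_mem_nhds (show (0:ℝ≥0∞) < ENNReal.ofReal δ by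
    simpa using hδ))
  have hev2 := (tendstoInMeasure_iff_dist.mp (hunif ε₀ hε₀) (a / 3) (by linarith)).eventually
    (gt_mem_nhds (show (0:ℝ≥0∞) < ENNReal.ofReal δ by simpa using hδ))
  obtain ⟨N₀, hN₀⟩ := (hev1.and hev2).exists_forall_of_atTop
  refine ⟨N₀, fun N hN => ?_⟩
  obtain ⟨hh1, hh2⟩ := hN₀ N hN
  -- from now on, N is fixed
  have hm' : 𝔉 N ≤ m := h𝔉 N
  haveI : IsFiniteMeasure (μ.trim hm') := isFiniteMeasure_trim hm'
  set n := M N with hndef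
  -- truncated variables
  set W : ℕ → Ω → ℝ := fun j ω => if ε₀ ≤ |V N j ω| then 0 else V N j ω with hWdef
  set U : ℕ → Ω → ℝ := fun j ω => V N j ω - W j ω with hUdef
  have hWmeas : ∀ j, Measurable (W j) := by
    intro j
    exact Measurable.ite (measurableSet_le measurable_const (hmeas N j).abs)
      measurable_const (hmeas N j)
  have hWb : ∀ j x, |W j x| ≤ ε₀ := by
    intro j x
    simp only [hWdef]
    split
    · simpa using hε₀.le
    · next h => exact le_of_not_ge h
  have hWabs_le : ∀ j x, |W j x| ≤ |V N j x| := by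
    intro j x
    simp only [hWdef]
    split
    · simpa using abs_nonneg _
    · exact le_rfl
  have hWint : ∀ j, Integrable (W j) μ :=
    fun j => integrable_of_abs_le (hWmeas j).aestronglyMeasurable (hWb j)
  have hUmeas : ∀ j, Measurable (U j) := fun j => (hmeas N j).sub (hWmeas j)
  have hUint : ∀ j, Integrable (U j) μ := fun j => (hint N j).sub (hWint j)
  have hUabs : ∀ j ω, |U j ω|
      = |V N j ω| * Set.indicator {ω'' | ε₀ ≤ |V N j ω''|} 1 ω := by
    intro j ω
    simp only [hUdef, hWdef, Set.indicator_apply, Set.mem_setOf_eq, Pi.one_apply]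
    split
    · simp
    · simp
  -- identify the Lindeberg sum
  have hTeq : (fun ω => ∑ j ∈ range n,
      (μ[fun ω' => |V N j ω'| * Set.indicator {ω'' | ε₀ ≤ |V N j ω''|} 1 ω' | (𝔉 N)]) ω)
      = fun ω => ∑ j ∈ range n, (μ[fun ω' => |U j ω'| | (𝔉 N)]) ω := by
    funext ω
    refine Finset.sum_congr rfl fun j _ => ?_
    congr 1
    funext ω'
    rw [hUabs]
  set T : Ω → ℝ := fun ω => ∑ j ∈ range n, (μ[fun ω' => |U j ω'| | (𝔉 N)]) ω with hTdef
  -- the three exceptional sets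
  set mA := {ω | a / 3 ≤ ∑ j ∈ range n, |U j ω|} with hmAdef
  set mB := {ω | a / 3 ≤ |∑ j ∈ range n, (μ[U j | (𝔉 N)]) ω|} with hmBdef
  set mC := {ω | a / 3 ≤ |∑ j ∈ range n, (W j ω - (μ[W j | (𝔉 N)]) ω)|} with hmCdef
  set G := {ω | ∑ j ∈ range n, (μ[fun ω' => |U j ω'| | (𝔉 N)]) ω ≤ b} with hGdef
  set R : Ω → ℝ := fun ω => ∑ j ∈ range n, (μ[fun ω' => |V N j ω'| | (𝔉 N)]) ω with hRdef
  set D := {ω | R ω ≤ K} with hDdef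
  -- a.e. decomposition of the centered sum
  have hsp : ∀ᵐ ω ∂μ, ∀ j, j ∈ range n →
      (μ[V N j | (𝔉 N)]) ω = (μ[U j | (𝔉 N)]) ω + (μ[W j | (𝔉 N)]) ω := by
    rw [ae_all_iff]
    intro j
    by_cases hj : j ∈ range n
    · have hVeq : V N j = U j + W j := by
        funext ω
        simp [hUdef]
      have := condExp_add (μ := μ) (m := (𝔉 N)) (hUint j) (hWint j)
      rw [← hVeq] at this
      filter_upwards [this] with ω hω
      exact fun _ => hω
    · exact ae_of_all _ fun ω h => absurd h hj
  have hsplit : ∀ᵐ ω ∂μ, ∑ j ∈ range n, (V N j ω - (μ[V N j | (𝔉 N)]) ω)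
      = (∑ j ∈ range n, U j ω) - (∑ j ∈ range n, (μ[U j | (𝔉 N)]) ω)
        + ∑ j ∈ range n, (W j ω - (μ[W j | (𝔉 N)]) ω) := by
    filter_upwards [hsp] with ω hω
    rw [← Finset.sum_sub_distrib, ← Finset.sum_add_distrib]
    refine Finset.sum_congr rfl fun j hj => ?_
    rw [hω j hj]
    simp only [hUdef]
    ring
  -- inclusion into the union of the three exceptional sets
  have hsub : μ {ω | a ≤ dist ((fun ω => ∑ j ∈ range n, (V N j ω - (μ[V N j | (𝔉 N)]) ω)) ω) 0}
      ≤ μ (mA ∪ mB ∪ mC) := by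
    refine measure_mono_ae ?_
    filter_upwards [hsplit] with ω hω hmem
    have hmem2 : a ≤ |∑ j ∈ range n, (V N j ω - (μ[V N j | (𝔉 N)]) ω)| := by
      have : a ≤ dist (∑ j ∈ range n, (V N j ω - (μ[V N j | (𝔉 N)]) ω)) 0 := hmem
      rwa [Real.dist_eq, sub_zero] at this
    show ω ∈ mA ∪ mB ∪ mC
    by_contra hcon
    simp only [Set.mem_union, hmAdef, hmBdef, hmCdef, Set.mem_setOf_eq, not_or, not_le] at hcon
    obtain ⟨⟨hA, hB⟩, hC⟩ := hcon
    have h1 : |∑ j ∈ range n, (V N j ω - (μ[V N j | (𝔉 N)]) ω)|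
        ≤ (∑ j ∈ range n, |U j ω|) + |∑ j ∈ range n, (μ[U j | (𝔉 N)]) ω|
          + |∑ j ∈ range n, (W j ω - (μ[W j | (𝔉 N)]) ω)| := by
      rw [hω]
      calc |(∑ j ∈ range n, U j ω) - (∑ j ∈ range n, (μ[U j | (𝔉 N)]) ω)
          + ∑ j ∈ range n, (W j ω - (μ[W j | (𝔉 N)]) ω)|
          ≤ |(∑ j ∈ range n, U j ω) - (∑ j ∈ range n, (μ[U j | (𝔉 N)]) ω)|
            + |∑ j ∈ range n, (W j ω - (μ[W j | (𝔉 N)]) ω)| := abs_add_le _ _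
      _ ≤ |∑ j ∈ range n, U j ω| + |∑ j ∈ range n, (μ[U j | (𝔉 N)]) ω|
            + |∑ j ∈ range n, (W j ω - (μ[W j | (𝔉 N)]) ω)| := by
          have := abs_sub (∑ j ∈ range n, U j ω) (∑ j ∈ range n, (μ[U j | (𝔉 N)]) ω)
          linarith
      _ ≤ (∑ j ∈ range n, |U j ω|) + |∑ j ∈ range n, (μ[U j | (𝔉 N)]) ω|
            + |∑ j ∈ range n, (W j ω - (μ[W j | (𝔉 N)]) ω)| := by
          have := Finset.abs_sum_le_sum_abs (fun j => U j ω) (range n)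
          linarith
    linarith [hmem2, h1]
  -- bound on mB via T
  have hmB_bound : μ mB ≤ μ {ω | a / 3 ≤ |T ω|} := by
    refine measure_mono_ae ?_
    have hj : ∀ᵐ ω ∂μ, ∀ j, j ∈ range n →
        |(μ[U j | (𝔉 N)]) ω| ≤ (μ[fun ω' => |U j ω'| | (𝔉 N)]) ω := by
      rw [ae_all_iff]
      intro j
      by_cases hjn : j ∈ range n
      · filter_upwards [abs_condexp_le_abs (m := (𝔉 N)) (U j) (hUint j)] with ω hω
        exact fun _ => hω
      · exact ae_of_all _ fun ω h => absurd h hjn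
    filter_upwards [hj] with ω hω hmem
    have hmem2 : a / 3 ≤ |∑ j ∈ range n, (μ[U j | (𝔉 N)]) ω| := hmem
    have h1 : |∑ j ∈ range n, (μ[U j | (𝔉 N)]) ω| ≤ T ω := by
      calc |∑ j ∈ range n, (μ[U j | (𝔉 N)]) ω| ≤ ∑ j ∈ range n, |(μ[U j | (𝔉 N)]) ω| :=
        Finset.abs_sum_le_sum_abs _ _
      _ ≤ ∑ j ∈ range n, (μ[fun ω' => |U j ω'| | (𝔉 N)]) ω :=
        Finset.sum_le_sum fun j hjn => hω j hjn
      _ = T ω := rfl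
    show a / 3 ≤ |T ω|
    exact le_trans (le_trans hmem2 h1) (le_abs_self _)
  -- bound on mA via Markov and the Lindeberg sum
  have hmA_bound : μ mA ≤ μ {ω | b ≤ |T ω|} + ENNReal.ofReal δ := by
    have h1 : mA ⊆ (mA ∩ G) ∪ Gᶜ := by
      intro ω hω
      by_cases hG : ω ∈ G
      · exact Or.inl ⟨hω, hG⟩
      · exact Or.inr hG
    have h2 : Gᶜ ⊆ {ω | b ≤ |T ω|} := by
      intro ω hω
      simp only [hGdef, Set.mem_compl_iff, Set.mem_setOf_eq, not_le] at hω
      exact le_trans hω.le (le_abs_self _)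
    have h3 : μ (mA ∩ G) ≤ ENNReal.ofReal δ := by
      have := markov_aux μ hm' (n := n) (U := U) hUmeas hUint
        (c := a / 3) (b := b) (by linarith) hb.le
      refine le_trans this ?_
      refine ENNReal.ofReal_le_ofReal ?_
      rw [hbdef, div_le_iff₀ (by linarith : (0:ℝ) < a / 3)]
      ring_nf
      nlinarith
    calc μ mA ≤ μ ((mA ∩ G) ∪ Gᶜ) := measure_mono h1
    _ ≤ μ (mA ∩ G) + μ Gᶜ := measure_union_le _ _
    _ ≤ ENNReal.ofReal δ + μ {ω | b ≤ |T ω|} := add_le_add h3 (measure_mono h2)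
    _ = μ {ω | b ≤ |T ω|} + ENNReal.ofReal δ := add_comm _ _
  -- bound on mC via Chebyshev
  have hmC_bound : μ mC ≤ ENNReal.ofReal δ + ENNReal.ofReal δ := by
    have h1 : mC ⊆ (mC ∩ D) ∪ Dᶜ := by
      intro ω hω
      by_cases hD : ω ∈ D
      · exact Or.inl ⟨hω, hD⟩
      · exact Or.inr hD
    have hDc : μ Dᶜ < ENNReal.ofReal δ := by
      have : Dᶜ = {ω | K < ∑ j ∈ range (M N), (μ[fun ω' => |V N j ω'| | 𝔉 N]) ω} := by
        ext ω
        simp [hDdef, hRdef, not_le, hndef]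
      rw [this]
      exact hK N
    have hcheb : μ (mC ∩ D) ≤ ENNReal.ofReal δ := by
      have hind' : ∀ i j, i < n → j < n → i ≠ j → CondIndepFun (𝔉 N) hm' (W i) (W j) μ := by
        intro i j hi hj hij
        have hVind : CondIndepFun (𝔉 N) hm' (V N i) (V N j) μ := by
          have := (hindep N).condIndepFun
            (i := (⟨i, hi⟩ : Fin (M N))) (j := (⟨j, hj⟩ : Fin (M N)))
            (by simp [Fin.ext_iff, hij])
          exact this
        have hcomp := hVind.comp (φ := fun x : ℝ => if ε₀ ≤ |x| then 0 else x)
          (ψ := fun x : ℝ => if ε₀ ≤ |x| then 0 else x)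
          (Measurable.ite (measurableSet_le measurable_const measurable_abs)
            measurable_const measurable_id)
          (Measurable.ite (measurableSet_le measurable_const measurable_abs)
            measurable_const measurable_id)
        exact hcomp
      have hRsm : StronglyMeasurable[(𝔉 N)] R :=
        Finset.stronglyMeasurable_fun_sum _ fun j _ => stronglyMeasurable_condExp
      have hRint : Integrable R μ := integrable_finset_sum _ fun j _ => integrable_condExp
      have hsum : ∀ᵐ ω ∂μ, ∑ j ∈ range n, (μ[fun ω' => |W j ω'| | (𝔉 N)]) ω ≤ R ω := by
        have hj : ∀ᵐ ω ∂μ, ∀ j, j ∈ range n →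
            (μ[fun ω' => |W j ω'| | (𝔉 N)]) ω ≤ (μ[fun ω' => |V N j ω'| | (𝔉 N)]) ω := by
          rw [ae_all_iff]
          intro j
          by_cases hjn : j ∈ range n
          · filter_upwards [condExp_mono (μ := μ) (m := (𝔉 N)) (hWint j).abs (hint N j).abs
              (ae_of_all _ fun x => hWabs_le j x)] with ω hω
            exact fun _ => hω
          · exact ae_of_all _ fun ω h => absurd h hjn
        filter_upwards [hj] with ω hω
        exact Finset.sum_le_sum fun j hjn => hω j hjn
      have := cheb_aux μ hm' (n := n) (W := W) hWmeas hε₀ hWb hind' hRsm hRint hsum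
        (e := a / 3) (K := K) (by linarith) hKpos.le
      have harith : 4 * ε₀ * K / (a / 3) ^ 2 ≤ δ := by
        have hKne : K ≠ 0 := hKpos.ne'
        have h1 : 4 * ε₀ * K = a ^ 2 * δ / 36 := by
          rw [hε₀def]; field_simp; ring
        rw [h1, div_le_iff₀ (by positivity : (0:ℝ) < (a / 3) ^ 2)]
        nlinarith [mul_nonneg (sq_nonneg a) hδ.le]
      exact le_trans this (ENNReal.ofReal_le_ofReal harith)
    calc μ mC ≤ μ ((mC ∩ D) ∪ Dᶜ) := measure_mono h1
    _ ≤ μ (mC ∩ D) + μ Dᶜ := measure_union_le _ _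
    _ ≤ ENNReal.ofReal δ + ENNReal.ofReal δ := add_le_add hcheb hDc.le
  -- put everything together
  have hT1 : μ {ω | b ≤ |T ω|} < ENNReal.ofReal δ := by
    have : {ω | b ≤ |T ω|} = {x | b ≤ dist ((fun N ω => ∑ j ∈ range (M N),
        (μ[fun ω' => |V N j ω'| * Set.indicator {ω'' | ε₀ ≤ |V N j ω''|} 1 ω' | 𝔉 N]) ω) N x)
        ((fun _ => (0:ℝ)) x)} := by
      ext ω
      simp only [Set.mem_setOf_eq, Real.dist_eq, sub_zero]
      rw [show T ω = ∑ j ∈ range (M N),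
        (μ[fun ω' => |V N j ω'| * Set.indicator {ω'' | ε₀ ≤ |V N j ω''|} 1 ω' | 𝔉 N]) ω from
        by rw [hTdef]; exact congrFun hTeq.symm ω]
    rw [this]
    exact hh1
  have hT2 : μ {ω | a / 3 ≤ |T ω|} < ENNReal.ofReal δ := by
    have : {ω | a / 3 ≤ |T ω|} = {x | a / 3 ≤ dist ((fun N ω => ∑ j ∈ range (M N),
        (μ[fun ω' => |V N j ω'| * Set.indicator {ω'' | ε₀ ≤ |V N j ω''|} 1 ω' | 𝔉 N]) ω) N x)
        ((fun _ => (0:ℝ)) x)} := by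
      ext ω
      simp only [Set.mem_setOf_eq, Real.dist_eq, sub_zero]
      rw [show T ω = ∑ j ∈ range (M N),
        (μ[fun ω' => |V N j ω'| * Set.indicator {ω'' | ε₀ ≤ |V N j ω''|} 1 ω' | 𝔉 N]) ω from
        by rw [hTdef]; exact congrFun hTeq.symm ω]
    rw [this]
    exact hh2
  calc μ {x | a ≤ dist ((fun N ω => ∑ j ∈ range (M N), (V N j ω - (μ[V N j | 𝔉 N]) ω)) N x)
        ((fun _ => (0:ℝ)) x)}
      ≤ μ (mA ∪ mB ∪ mC) := hsub
  _ ≤ μ (mA ∪ mB) + μ mC := measure_union_le _ _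
  _ ≤ μ mA + μ mB + μ mC := add_le_add_left (measure_union_le _ _) _
  _ ≤ (μ {ω | b ≤ |T ω|} + ENNReal.ofReal δ) + μ {ω | a / 3 ≤ |T ω|}
        + (ENNReal.ofReal δ + ENNReal.ofReal δ) :=
      add_le_add (add_le_add hmA_bound hmB_bound) hmC_bound
  _ ≤ (ENNReal.ofReal δ + ENNReal.ofReal δ) + ENNReal.ofReal δ
        + (ENNReal.ofReal δ + ENNReal.ofReal δ) :=
      add_le_add (add_le_add (add_le_add hT1.le le_rfl) hT2.le) le_rfl
  _ = 5 * ENNReal.ofReal δ := by ring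
  _ = ENNReal.ofReal (5 * δ) := by
      rw [ENNReal.ofReal_mul (by norm_num : (0:ℝ) ≤ 5)]
      norm_num
  _ ≤ ε := hδε
end

section
/- Let (Θ, 𝒯) be a measurable space with probability measures π and ρ satisfying π ≪ ρ, and suppose there is a version of the Radon–Nikodym derivative dπ/dρ bounded above by a constant C < ∞. Let φ : Θ → ℝ be measurable with φ ∈ L¹(Θ, π), let θ¹, θ², ... be i.i.d. samples from ρ, and for each N and each i ≤ N let φ̂_{N,i} be random variables such that sup_{θ∈Θ}-style uniform error e_N := sup_i |φ̂_{N,i} − φ(θ^i)| → 0 in probability as N_X → ∞ uniformly in N. Then N^{-1} Σ_{i=1}^N (dπ/dρ)(θ^i) φ̂_{N,i} → ∫_Θ φ dπ in probability as N, N_X → ∞. -/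
open MeasureTheory ProbabilityTheory Filter Finset
open scoped ENNReal NNReal Topology

/-- Consistency of the particle swarm filter: importance-weighted averages of
approximate evaluations converge in probability to `∫ φ dπ` as both the number of
parameter samples and the number of state particles tend to infinity. -/
theorem particle_swarm_consistency
    {Ω : Type*} [MeasurableSpace Ω] (μ : Measure Ω) [IsProbabilityMeasure μ]
    {Θ : Type*} [MeasurableSpace Θ]
    (π ρ : Measure Θ) [IsProbabilityMeasure π] [IsProbabilityMeasure ρ]
    (hac : π ≪ ρ)
    -- a version `w` of the Radon–Nikodym derivative dπ/dρ, bounded by C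
    (w : Θ → ℝ) (hw_meas : Measurable w) (hw_nonneg : ∀ θ, 0 ≤ w θ)
    (hw_density : π = ρ.withDensity (fun θ => ENNReal.ofReal (w θ)))
    (C : ℝ) (hC : ∀ θ, w θ ≤ C)
    (φ : Θ → ℝ) (hφ_meas : Measurable φ) (hφ_int : Integrable φ π)
    -- i.i.d. samples from ρ
    (θs : ℕ → Ω → Θ) (hθ_meas : ∀ i, Measurable (θs i))
    (hiid : iIndepFun θs μ)
    (hlaw : ∀ i, μ.map (θs i) = ρ)
    -- approximate evaluations, indexed by number of particles NX, number of filters N, filter i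
    (est : ℕ → ℕ → ℕ → Ω → ℝ)
    -- uniform (over i and N) convergence in probability of the approximation error
    (hunif : ∀ ε δ : ℝ, 0 < ε → 0 < δ → ∃ NX0 : ℕ, ∀ NX ≥ NX0, ∀ N : ℕ,
      μ {ω | ε ≤ ⨆ i ∈ range N, |est NX N i ω - φ (θs i ω)|} < ENNReal.ofReal δ) :
    TendstoInMeasure μ
      (fun p : ℕ × ℕ => fun ω =>
        (p.1 : ℝ)⁻¹ * ∑ i ∈ range p.1, w (θs i ω) * est p.2 p.1 i ω)
      (atTop ×ˢ atTop) (fun _ => ∫ θ, φ θ ∂π) := by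
  -- C is nonnegative
  have hΘ : Nonempty Θ := by
    by_contra h
    rw [not_nonempty_iff] at h
    have : (π Set.univ) = 1 := measure_univ
    simp [Set.univ_eq_empty_iff.2 h] at this
  obtain ⟨θ₀⟩ := hΘ
  have hC0 : 0 ≤ C := le_trans (hw_nonneg θ₀) (hC θ₀)
  -- the weighted integrand
  set g : Θ → ℝ := fun θ => w θ * φ θ with hg_def
  have hg_meas : Measurable g := hw_meas.mul hφ_meas
  -- rewrite the density with nonneg real weights
  have hdens : π = ρ.withDensity (fun θ => ((w θ).toNNReal : ℝ≥0∞)) := by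
    simpa [ENNReal.ofReal] using hw_density
  -- integrability of g under ρ
  have hg_int : Integrable g ρ := by
    have h1 : Integrable φ (ρ.withDensity fun θ => ENNReal.ofReal (w θ)) := by
      rwa [← hw_density]
    rw [integrable_withDensity_iff (by measurability)
      (Filter.Eventually.of_forall fun x => ENNReal.ofReal_lt_top)] at h1
    have : (fun x => φ x * (ENNReal.ofReal (w x)).toReal) = g := by
      funext x
      simp [hg_def, ENNReal.toReal_ofReal (hw_nonneg x), mul_comm]
    rwa [this] at h1
  -- the integral identity ∫ g dρ = ∫ φ dπ
  have hint_eq : ∫ θ, g θ ∂ρ = ∫ θ, φ θ ∂π := by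
    rw [hdens, integral_withDensity_eq_integral_smul (by measurability) φ]
    congr 1
    funext x
    simp [hg_def, NNReal.smul_def, Real.coe_toNNReal _ (hw_nonneg x)]
  -- the exact importance-weighted averages
  set X : ℕ → Ω → ℝ := fun i ω => g (θs i ω) with hX_def
  have hX_meas : ∀ i, Measurable (X i) := fun i => hg_meas.comp (hθ_meas i)
  have hX_map : ∀ i, μ.map (X i) = ρ.map g := by
    intro i
    show μ.map (g ∘ θs i) = ρ.map g
    rw [← Measure.map_map hg_meas (hθ_meas i), hlaw i]
  have hX_ident : ∀ i, IdentDistrib (X i) (X 0) μ μ :=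
    fun i => ⟨(hX_meas i).aemeasurable, (hX_meas 0).aemeasurable,
      by rw [hX_map i, hX_map 0]⟩
  have hX_indep : Pairwise (Function.onFun (IndepFun · · μ) X) := by
    intro i j hij
    exact (hiid.indepFun hij).comp hg_meas hg_meas
  have hX0_int : Integrable (X 0) μ := by
    have := (hX_ident 0).symm
    rw [hX_def]
    have : Integrable g (μ.map (θs 0)) := by rw [hlaw 0]; exact hg_int
    exact (integrable_map_measure hg_meas.aestronglyMeasurable
      (hθ_meas 0).aemeasurable).mp this
  have hEX0 : μ[X 0] = ∫ θ, φ θ ∂π := by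
    rw [← hint_eq, ← hlaw 0,
      integral_map (hθ_meas 0).aemeasurable hg_meas.aestronglyMeasurable]
  -- strong law of large numbers for the exact averages
  have hslln := strong_law_ae X hX0_int hX_indep hX_ident
  rw [hEX0] at hslln
  -- hence convergence in measure of the exact averages
  have hA_meas : ∀ N : ℕ, AEStronglyMeasurable
      (fun ω => (N : ℝ)⁻¹ • ∑ i ∈ range N, X i ω) μ := by
    intro N
    exact ((Finset.measurable_sum (range N) fun i _ => hX_meas i).const_smul
      ((N : ℝ)⁻¹)).aestronglyMeasurable
  have hA_tim : TendstoInMeasure μ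
      (fun N : ℕ => fun ω => (N : ℝ)⁻¹ • ∑ i ∈ range N, X i ω) atTop
      (fun _ => ∫ θ, φ θ ∂π) :=
    tendstoInMeasure_of_tendsto_ae hA_meas hslln
  -- now the main argument
  rw [tendstoInMeasure_iff_dist]
  intro ε hε
  set I : ℝ := ∫ θ, φ θ ∂π
  set t : ℝ := ε / (2 * (C + 1)) with ht_def
  have ht : 0 < t := div_pos hε (by linarith)
  have htC : C * t ≤ ε / 2 := by
    have h1 : (0:ℝ) < 2 * (C + 1) := by linarith
    rw [ht_def, ← mul_div_assoc, div_le_div_iff₀ h1 (by norm_num : (0:ℝ) < 2)]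
    nlinarith [hε.le]
  -- the error functional
  set e : ℕ × ℕ → Ω → ℝ :=
    fun p ω => ⨆ i ∈ range p.1, |est p.2 p.1 i ω - φ (θs i ω)| with he_def
  -- first tendsto: error term
  have hT1 : Tendsto (fun p : ℕ × ℕ => μ {ω | t ≤ e p ω}) (atTop ×ˢ atTop) (𝓝 0) := by
    rw [ENNReal.tendsto_nhds_zero]
    intro ε' hε'
    set δ : ℝ := (min 1 ε').toReal with hδ_def
    have hδpos : 0 < δ := by
      rw [hδ_def]
      apply ENNReal.toReal_pos
      · simp only [ne_eq, min_eq_iff]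
        push_neg
        constructor <;> intro h <;> simp_all
      · exact ne_top_of_le_ne_top (by simp) (min_le_left _ _)
    have hδle : ENNReal.ofReal δ ≤ ε' := by
      rw [hδ_def, ENNReal.ofReal_toReal (ne_top_of_le_ne_top (by simp) (min_le_left 1 ε'))]
      exact min_le_right _ _
    obtain ⟨NX0, hNX0⟩ := hunif t δ ht hδpos
    have : ∀ᶠ p : ℕ × ℕ in atTop ×ˢ atTop, NX0 ≤ p.2 :=
      (tendsto_snd (f := (atTop : Filter ℕ))).eventually (eventually_ge_atTop NX0)
    filter_upwards [this] with p hp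
    exact le_trans (hNX0 p.2 hp p.1).le hδle
  -- second tendsto: LLN term
  have hT2 : Tendsto (fun p : ℕ × ℕ =>
      μ {ω | ε / 2 ≤ dist ((p.1 : ℝ)⁻¹ • ∑ i ∈ range p.1, X i ω) I}) (atTop ×ˢ atTop)
      (𝓝 0) :=
    (tendstoInMeasure_iff_dist.mp hA_tim (ε / 2) (by linarith)).comp tendsto_fst
  -- pointwise bound: |S - A| ≤ C * e
  have key : ∀ p : ℕ × ℕ, ∀ ω : Ω,
      |((p.1 : ℝ)⁻¹ * ∑ i ∈ range p.1, w (θs i ω) * est p.2 p.1 i ω) -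
        ((p.1 : ℝ)⁻¹ • ∑ i ∈ range p.1, X i ω)| ≤ C * e p ω := by
    intro p ω
    obtain ⟨N, NX⟩ := p
    simp only [smul_eq_mul]
    rw [← mul_sub, ← Finset.sum_sub_distrib]
    have hterm : ∀ i, w (θs i ω) * est NX N i ω - X i ω
        = w (θs i ω) * (est NX N i ω - φ (θs i ω)) := by
      intro i; simp [hX_def, hg_def]; ring
    -- boundedness of the conditional sup family
    set f : ℕ → ℝ := fun i => |est NX N i ω - φ (θs i ω)| with hf_def
    set g' : ℕ → ℝ := fun i => ⨆ _ : i ∈ range N, f i with hg'_def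
    have hbdd : BddAbove (Set.range g') := by
      apply BddAbove.mono (s := Set.range g')
        (t := insert 0 (f '' (range N : Set ℕ)))
      · rintro x ⟨i, rfl⟩
        by_cases hi : i ∈ range N
        · right
          rw [hg'_def]
          simp only
          rw [ciSup_pos hi]
          exact ⟨i, hi, rfl⟩
        · left
          rw [hg'_def]
          simp [hi]
      · exact ((Set.Finite.image f (Finset.finite_toSet (range N))).insert 0).bddAbove
    have hfle : ∀ i ∈ range N, f i ≤ e (N, NX) ω := by
      intro i hi
      have h1 : f i = g' i := by rw [hg'_def]; simp only; rw [ciSup_pos hi]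
      have h2 : g' i ≤ ⨆ j, g' j := le_ciSup hbdd i
      rw [h1]
      exact h2
    have he_nonneg : 0 ≤ e (N, NX) ω := by
      apply Real.iSup_nonneg
      intro i
      apply Real.iSup_nonneg
      intro _
      exact abs_nonneg _
    calc |(N : ℝ)⁻¹ * ∑ i ∈ range N, (w (θs i ω) * est NX N i ω - X i ω)|
        = (N : ℝ)⁻¹ * |∑ i ∈ range N, (w (θs i ω) * est NX N i ω - X i ω)| := by
          rw [abs_mul, abs_of_nonneg (by positivity : (0:ℝ) ≤ (N : ℝ)⁻¹)]
      _ ≤ (N : ℝ)⁻¹ * ∑ i ∈ range N, |w (θs i ω) * est NX N i ω - X i ω| := by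
          gcongr
          exact Finset.abs_sum_le_sum_abs _ _
      _ ≤ (N : ℝ)⁻¹ * ∑ i ∈ range N, C * e (N, NX) ω := by
          gcongr with i hi
          rw [hterm i, abs_mul, abs_of_nonneg (hw_nonneg _)]
          exact mul_le_mul (hC _) (hfle i hi) (abs_nonneg _) hC0
      _ = (N : ℝ)⁻¹ * (N * (C * e (N, NX) ω)) := by
          rw [Finset.sum_const, card_range, nsmul_eq_mul]
      _ ≤ C * e (N, NX) ω := by
          rcases Nat.eq_zero_or_pos N with hN | hN
          · simp only [hN, Nat.cast_zero, inv_zero, zero_mul]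
            exact mul_nonneg hC0 (hN ▸ he_nonneg)
          · rw [← mul_assoc, inv_mul_cancel₀ (by positivity), one_mul]
  -- set inclusion and conclusion
  have hsub : ∀ p : ℕ × ℕ,
      {ω | ε ≤ dist ((p.1 : ℝ)⁻¹ * ∑ i ∈ range p.1, w (θs i ω) * est p.2 p.1 i ω) I}
      ⊆ {ω | t ≤ e p ω} ∪
        {ω | ε / 2 ≤ dist ((p.1 : ℝ)⁻¹ • ∑ i ∈ range p.1, X i ω) I} := by
    intro p ω hω
    simp only [Set.mem_setOf_eq, Real.dist_eq] at hω
    by_contra h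
    simp only [Set.mem_union, Set.mem_setOf_eq, Real.dist_eq, not_or, not_le] at h
    obtain ⟨h1, h2⟩ := h
    have hkey := key p ω
    have : |((p.1 : ℝ)⁻¹ * ∑ i ∈ range p.1, w (θs i ω) * est p.2 p.1 i ω) - I|
        ≤ C * e p ω + |((p.1 : ℝ)⁻¹ • ∑ i ∈ range p.1, X i ω) - I| := by
      calc |((p.1 : ℝ)⁻¹ * ∑ i ∈ range p.1, w (θs i ω) * est p.2 p.1 i ω) - I|
          ≤ |((p.1 : ℝ)⁻¹ * ∑ i ∈ range p.1, w (θs i ω) * est p.2 p.1 i ω) -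
              ((p.1 : ℝ)⁻¹ • ∑ i ∈ range p.1, X i ω)| +
            |((p.1 : ℝ)⁻¹ • ∑ i ∈ range p.1, X i ω) - I| := abs_sub_le _ _ _
        _ ≤ C * e p ω + |((p.1 : ℝ)⁻¹ • ∑ i ∈ range p.1, X i ω) - I| := by gcongr
    have hCe : C * e p ω ≤ C * t := mul_le_mul_of_nonneg_left h1.le hC0
    linarith
  have hbound : ∀ p : ℕ × ℕ,
      μ {ω | ε ≤ dist ((p.1 : ℝ)⁻¹ * ∑ i ∈ range p.1, w (θs i ω) * est p.2 p.1 i ω) I}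
      ≤ μ {ω | t ≤ e p ω} +
        μ {ω | ε / 2 ≤ dist ((p.1 : ℝ)⁻¹ • ∑ i ∈ range p.1, X i ω) I} :=
    fun p => le_trans (measure_mono (hsub p)) (measure_union_le _ _)
  have hsum : Tendsto (fun p : ℕ × ℕ => μ {ω | t ≤ e p ω} +
      μ {ω | ε / 2 ≤ dist ((p.1 : ℝ)⁻¹ • ∑ i ∈ range p.1, X i ω) I})
      (atTop ×ˢ atTop) (𝓝 0) := by
    have := Tendsto.add hT1 hT2
    simpa using this
  exact tendsto_of_tendsto_of_tendsto_of_le_of_le tendsto_const_nhds hsum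
    (fun p => zero_le) hbound
end
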